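/- Suppose the symmetric 3-tensor T satisfies condition (Γ). Let ∇T(u) ∈ ℝ^p be the gradient of T(u), whose i-th entry equals 3∑_{j,k=1}^p T_{i,j,k} u_j u_k. Then for every u ∈ ℝ^p it holds ‖∇T(u)‖ ≤ 3τ ‖Γu‖² ‖Γ‖. -/

import Mathlib

open Matrix Finset

/-- Euclidean norm on `ℝ^p`. -/
noncomputable def euclNorm {p : ℕ} (v : Fin p → ℝ) : ℝ := Real.sqrt (∑ i, v i ^ 2)

/-- Spectral (ℓ²-operator) norm of a real `p×p` matrix. -/
noncomputable def specNorm {p : ℕ} (A : Matrix (Fin p) (Fin p) ℝ) : ℝ :=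
  ‖Matrix.toEuclideanCLM (𝕜 := ℝ) A‖

namespace TGNB


def B3 {p : ℕ} (T : Fin p → Fin p → Fin p → ℝ) (x y z : Fin p → ℝ) : ℝ :=
  ∑ i, ∑ j, ∑ k, T i j k * x i * y j * z k

variable {p : ℕ}

lemma B3_swap12 (T : Fin p → Fin p → Fin p → ℝ)
    (hsym : ∀ i j k, T i j k = T j i k ∧ T i j k = T i k j)
    (x y z : Fin p → ℝ) : B3 T x y z = B3 T y x z := by
  unfold B3
  rw [Finset.sum_comm]
  exact Finset.sum_congr rfl fun i _ => Finset.sum_congr rfl fun j _ =>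
    Finset.sum_congr rfl fun k _ => by rw [(hsym j i k).1]; ring

lemma B3_swap23 (T : Fin p → Fin p → Fin p → ℝ)
    (hsym : ∀ i j k, T i j k = T j i k ∧ T i j k = T i k j)
    (x y z : Fin p → ℝ) : B3 T x y z = B3 T x z y := by
  unfold B3
  refine Finset.sum_congr rfl fun i _ => ?_
  rw [Finset.sum_comm]
  exact Finset.sum_congr rfl fun j _ =>
    Finset.sum_congr rfl fun k _ => by rw [(hsym i k j).2]; ring

lemma B3_comb1 (T : Fin p → Fin p → Fin p → ℝ) (a b c d : Fin p → ℝ) (x y : ℝ) :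
    B3 T (fun i => x * a i + y * b i) c d = x * B3 T a c d + y * B3 T b c d := by
  unfold B3
  rw [Finset.mul_sum, Finset.mul_sum, ← Finset.sum_add_distrib]
  refine Finset.sum_congr rfl fun i _ => ?_
  rw [Finset.mul_sum, Finset.mul_sum, ← Finset.sum_add_distrib]
  refine Finset.sum_congr rfl fun j _ => ?_
  rw [Finset.mul_sum, Finset.mul_sum, ← Finset.sum_add_distrib]
  exact Finset.sum_congr rfl fun k _ => by ring

lemma B3_smul3 (T : Fin p → Fin p → Fin p → ℝ) (a b c : Fin p → ℝ) (x y z : ℝ) :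
    B3 T (fun i => x * a i) (fun i => y * b i) (fun i => z * c i) = x * y * z * B3 T a b c := by
  unfold B3
  rw [Finset.mul_sum]
  refine Finset.sum_congr rfl fun i _ => ?_
  rw [Finset.mul_sum]
  refine Finset.sum_congr rfl fun j _ => ?_
  rw [Finset.mul_sum]
  exact Finset.sum_congr rfl fun k _ => by ring

lemma B3_expand (T : Fin p → Fin p → Fin p → ℝ)
    (hsym : ∀ i j k, T i j k = T j i k ∧ T i j k = T i k j)
    (a b : Fin p → ℝ) (x y : ℝ) :
    B3 T (fun i => x * a i + y * b i) (fun i => x * a i + y * b i) (fun i => x * a i + y * b i)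
      = x^3 * B3 T a a a + 3*x^2*y * B3 T a a b + 3*x*y^2 * B3 T a b b + y^3 * B3 T b b b := by
  have h2 : ∀ c d : Fin p → ℝ,
      B3 T c (fun i => x * a i + y * b i) d = x * B3 T c a d + y * B3 T c b d := by
    intro c d
    rw [B3_swap12 T hsym c _ d, B3_comb1, B3_swap12 T hsym a c d, B3_swap12 T hsym b c d]
  have h3 : ∀ c d : Fin p → ℝ,
      B3 T c d (fun i => x * a i + y * b i) = x * B3 T c d a + y * B3 T c d b := by
    intro c d
    rw [B3_swap23 T hsym c d _, h2, B3_swap23 T hsym c a d, B3_swap23 T hsym c b d]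
  rw [B3_comb1, h2, h2, h3, h3, h3, h3]
  rw [B3_swap23 T hsym a b a, B3_swap12 T hsym b a a, B3_swap23 T hsym a b a,
    B3_swap23 T hsym b b a, B3_swap12 T hsym b a b]
  ring


variable {p : ℕ}

lemma euclNorm_nonneg (v : Fin p → ℝ) : 0 ≤ euclNorm v := Real.sqrt_nonneg _

lemma euclNorm_sq (v : Fin p → ℝ) : euclNorm v ^ 2 = ∑ i, v i ^ 2 :=
  Real.sq_sqrt (Finset.sum_nonneg fun i _ => sq_nonneg _)

lemma euclNorm_eq_one {v : Fin p → ℝ} (h : ∑ i, v i ^ 2 = 1) : euclNorm v = 1 := by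
  rw [euclNorm, h, Real.sqrt_one]

lemma euclNorm_eq_zero {v : Fin p → ℝ} (h : euclNorm v = 0) : v = 0 := by
  have h2 : ∑ i, v i ^ 2 = 0 := by
    have := euclNorm_sq v
    rw [h] at this; linarith [this.symm]
  funext i
  have := (Finset.sum_eq_zero_iff_of_nonneg (fun i _ => sq_nonneg (v i))).mp h2 i (Finset.mem_univ i)
  exact pow_eq_zero_iff (n := 2) (by norm_num) |>.mp this

lemma sum_sq_comb (P Q : Fin p → ℝ) (x y : ℝ) :
    ∑ i, (x * P i + y * Q i)^2
      = x^2 * ∑ i, P i ^2 + (2*x*y) * ∑ i, P i * Q i + y^2 * ∑ i, Q i ^2 := by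
  rw [Finset.mul_sum, Finset.mul_sum, Finset.mul_sum, ← Finset.sum_add_distrib,
    ← Finset.sum_add_distrib]
  exact Finset.sum_congr rfl fun i _ => by ring

lemma sum_mul_comb (P V U : Fin p → ℝ) (x y : ℝ) :
    ∑ i, P i * (x * V i + y * U i) = x * ∑ i, P i * V i + y * ∑ i, P i * U i := by
  rw [Finset.mul_sum, Finset.mul_sum, ← Finset.sum_add_distrib]
  exact Finset.sum_congr rfl fun i _ => by ring

lemma sum_sq_smul (P : Fin p → ℝ) (t : ℝ) :
    ∑ i, (t * P i)^2 = t^2 * ∑ i, P i ^ 2 := by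
  rw [Finset.mul_sum]; exact Finset.sum_congr rfl fun i _ => by ring

lemma sum_mul_smul (P Q : Fin p → ℝ) (t r : ℝ) :
    ∑ i, (t * P i) * (r * Q i) = t * r * ∑ i, P i * Q i := by
  rw [Finset.mul_sum]; exact Finset.sum_congr rfl fun i _ => by ring

lemma mulVec_comb (Γ : Matrix (Fin p) (Fin p) ℝ) (u v : Fin p → ℝ) (x y : ℝ) :
    Γ.mulVec (fun i => x * u i + y * v i) = fun j => x * Γ.mulVec u j + y * Γ.mulVec v j := by
  funext j
  simp only [Matrix.mulVec, dotProduct]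
  rw [Finset.mul_sum, Finset.mul_sum, ← Finset.sum_add_distrib]
  exact Finset.sum_congr rfl fun k _ => by ring

lemma mulVec_smul' (Γ : Matrix (Fin p) (Fin p) ℝ) (u : Fin p → ℝ) (t : ℝ) :
    Γ.mulVec (fun i => t * u i) = fun j => t * Γ.mulVec u j := by
  funext j
  simp only [Matrix.mulVec, dotProduct]
  rw [Finset.mul_sum]
  exact Finset.sum_congr rfl fun k _ => by ring

lemma euclNorm_mulVec_le (Γ : Matrix (Fin p) (Fin p) ℝ) (v : Fin p → ℝ) :
    euclNorm (Γ.mulVec v) ≤ specNorm Γ * euclNorm v := by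
  have key : ∀ w : Fin p → ℝ, ‖(WithLp.equiv 2 (Fin p → ℝ)).symm w‖ = euclNorm w := by
    intro w
    rw [EuclideanSpace.norm_eq, euclNorm]
    congr 1
    exact Finset.sum_congr rfl fun i _ => by
      rw [WithLp.equiv_symm_apply, PiLp.toLp_apply, Real.norm_eq_abs, sq_abs]
  have h := (Matrix.toEuclideanCLM (𝕜 := ℝ) Γ).le_opNorm ((WithLp.equiv 2 (Fin p → ℝ)).symm v)
  rw [show (Matrix.toEuclideanCLM (𝕜 := ℝ) Γ) ((WithLp.equiv 2 (Fin p → ℝ)).symm v) = (WithLp.equiv 2 (Fin p → ℝ)).symm (Matrix.toLin' Γ v) from rfl] at h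
  rw [key, key] at h
  rwa [Matrix.toLin'_apply] at h



lemma cubic_bounded {a b c d K : ℝ} (h : ∀ t : ℝ, |a + b*t + c*t^2 + d*t^3| ≤ K) :
    b = 0 ∧ c = 0 ∧ d = 0 := by
  have hK : 0 ≤ K := le_trans (abs_nonneg _) (h 0)
  have hpair : ∀ t : ℝ, |a + c*t^2| ≤ K ∧ |b*t + d*t^3| ≤ K := by
    intro t
    have h1 := abs_le.mp (h t)
    have h2' := h (-t)
    have heq : a + b*(-t) + c*(-t)^2 + d*(-t)^3 = a - b*t + c*t^2 - d*t^3 := by ring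
    rw [heq] at h2'
    have h2 := abs_le.mp h2'
    constructor
    · exact abs_le.mpr ⟨by linarith, by linarith⟩
    · exact abs_le.mpr ⟨by linarith, by linarith⟩
  -- c = 0
  have hc : c = 0 := by
    by_contra hc
    have hcabs : 0 < |c| := abs_pos.mpr hc
    set S : ℝ := (K + |a| + 1) / |c| with hS
    have hSpos : 0 < S := by positivity
    have ht2 : Real.sqrt S ^ 2 = S := Real.sq_sqrt hSpos.le
    have hb := (hpair (Real.sqrt S)).1
    rw [ht2] at hb
    have h1 : |c * S| = K + |a| + 1 := by
      rw [abs_mul, abs_of_pos hSpos, hS]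
      field_simp
    have h2 : |c * S| ≤ |a + c * S| + |a| := by
      calc |c * S| = |(a + c * S) + (-a)| := by ring_nf
        _ ≤ |a + c * S| + |(-a)| := abs_add_le _ _
        _ = |a + c * S| + |a| := by rw [abs_neg]
    linarith
  -- d = 0
  have hd : d = 0 := by
    by_contra hd
    have hdabs : 0 < |d| := abs_pos.mpr hd
    set S : ℝ := (K + |b| + 1) / |d| with hS
    have hSpos : 0 < S := by positivity
    set t : ℝ := max 1 (Real.sqrt S) with ht
    have ht1 : (1:ℝ) ≤ t := le_max_left _ _
    have ht0 : 0 < t := lt_of_lt_of_le one_pos ht1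
    have ht2 : S ≤ t^2 := by
      calc S = Real.sqrt S ^ 2 := (Real.sq_sqrt hSpos.le).symm
        _ ≤ t^2 := by
            apply pow_le_pow_left₀ (Real.sqrt_nonneg _) (le_max_right _ _)
    have hdt2 : K + |b| + 1 ≤ |d| * t^2 := by
      rw [hS] at ht2
      calc K + |b| + 1 = (K + |b| + 1) / |d| * |d| := by field_simp
        _ ≤ t^2 * |d| := by
            apply mul_le_mul_of_nonneg_right ht2 hdabs.le
        _ = |d| * t^2 := by ring
    have hb := (hpair t).2
    have h1 : |d * t^3| ≤ |b*t + d*t^3| + |b*t| := by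
      calc |d * t^3| = |(b*t + d*t^3) + (-(b*t))| := by ring_nf
        _ ≤ |b*t + d*t^3| + |(-(b*t))| := abs_add_le _ _
        _ = |b*t + d*t^3| + |b*t| := by rw [abs_neg]
    have h2 : |d * t^3| = |d| * t^3 := by
      rw [abs_mul, abs_of_pos (pow_pos ht0 3)]
    have h3 : |b * t| = |b| * t := by
      rw [abs_mul, abs_of_pos ht0]
    nlinarith [abs_nonneg b, hdt2, ht1, ht0]
  -- b = 0
  have hbz : b = 0 := by
    by_contra hb
    have hbabs : 0 < |b| := abs_pos.mpr hb
    set t : ℝ := (K + 1) / |b| with ht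
    have htpos : 0 < t := by positivity
    have h1 := (hpair t).2
    rw [hd] at h1
    have h2 : |b * t| = K + 1 := by
      rw [abs_mul, abs_of_pos htpos, ht]; field_simp
    have : b * t + 0 * t^3 = b * t := by ring
    rw [this] at h1
    linarith [h2 ▸ h1]
  exact ⟨hbz, hc, hd⟩



set_option maxHeartbeats 2000000 in
lemma trig_ineq (τ A B1 B2 Bb : ℝ) (hτ : 0 < τ)
    (hF : ∀ x y : ℝ, x^2 + y^2 = 1 →
      |x^3*A + 3*x^2*y*B1 + 3*x*y^2*B2 + y^3*Bb| ≤ τ) :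
    A^2 + B1^2 ≤ τ^2 := by
  by_cases h0 : A^2 + B1^2 = 0
  · rw [h0]; positivity
  have hpos : 0 < A^2 + B1^2 := lt_of_le_of_ne (by positivity) (Ne.symm h0)
  set r := Real.sqrt (A^2 + B1^2) with hrdef
  have hrpos : 0 < r := Real.sqrt_pos.mpr hpos
  have hr2 : r^2 = A^2 + B1^2 := Real.sq_sqrt hpos.le
  have hz0 : (⟨A, B1⟩ : ℂ) ≠ 0 := by
    intro hcon
    rw [Complex.ext_iff] at hcon
    simp only [Complex.zero_re, Complex.zero_im] at hcon
    exact h0 (by rw [show A = (⟨A, B1⟩ : ℂ).re from rfl, show B1 = (⟨A, B1⟩ : ℂ).im from rfl,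
      hcon.1, hcon.2]; ring)
  have habs : ‖(⟨A, B1⟩ : ℂ)‖ = r := by
    rw [Complex.norm_def, Complex.normSq_mk, hrdef]
    congr 1
    ring
  set ψ := Complex.arg (⟨A, B1⟩ : ℂ) with hψdef
  have hcosψ : Real.cos ψ = A / r := by
    rw [hψdef, Complex.cos_arg hz0, habs]
  have hsinψ : Real.sin ψ = B1 / r := by
    rw [hψdef, Complex.sin_arg, habs]
  have hA : r * Real.cos ψ = A := by rw [hcosψ]; field_simp
  have hB : r * Real.sin ψ = B1 := by rw [hsinψ]; field_simp
  set c := Real.cos (ψ/3) with hcdef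
  set s := Real.sin (ψ/3) with hsdef
  have hcs' : c^2 + s^2 = 1 := by
    have := Real.sin_sq_add_cos_sq (ψ/3)
    linarith
  have h3ψ : 3 * (ψ/3) = ψ := by ring
  have hcos3 : Real.cos ψ = 4*c^3 - 3*c := by
    rw [← h3ψ, Real.cos_three_mul]
  have hsin3 : Real.sin ψ = 3*s - 4*s^3 := by
    rw [← h3ψ, Real.sin_three_mul]
  set r3 := Real.sqrt 3 with hr3def
  have hr3 : r3^2 = 3 := Real.sq_sqrt (by norm_num)
  have e1 := hF c s (by linear_combination hcs')
  have e2 := hF (c/2 - r3*s/2) (s/2 + r3*c/2)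
    (by linear_combination ((1 + r3^2)/4) * hcs' + (1/4) * hr3)
  have e3 := hF (-c/2 - r3*s/2) (-s/2 + r3*c/2)
    (by linear_combination ((1 + r3^2)/4) * hcs' + (1/4) * hr3)
  have hw1 : (0:ℝ) ≤ (4*c^2-1)^2/9 := by positivity
  have haux1 : (0:ℝ) ≤ 2*c^2+1-2*r3*s*c := by
    have hX : 2*c^2+1-2*r3*s*c = (r3*c-s)^2 + (1 - (c^2+s^2)) + (3-r3^2)*c^2 := by ring
    rw [hcs', hr3] at hX
    norm_num at hX
    linarith [sq_nonneg (r3*c-s)]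
  have haux2 : (0:ℝ) ≤ 2*c^2+1+2*r3*s*c := by
    have hX : 2*c^2+1+2*r3*s*c = (r3*c+s)^2 + (1 - (c^2+s^2)) + (3-r3^2)*c^2 := by ring
    rw [hcs', hr3] at hX
    norm_num at hX
    linarith [sq_nonneg (r3*c+s)]
  have hw2 : (0:ℝ) ≤ 4*s^2/9*(2*c^2+1-2*r3*s*c) := mul_nonneg (by positivity) haux1
  have hw3 : (0:ℝ) ≤ 4*s^2/9*(2*c^2+1+2*r3*s*c) := mul_nonneg (by positivity) haux2
  have hsum : (4*c^2-1)^2/9 + 4*s^2/9*(2*c^2+1-2*r3*s*c) + 4*s^2/9*(2*c^2+1+2*r3*s*c) = 1 := by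
    linear_combination ((8/9) + (16/9)*c^2) * hcs'
  have hid : (4*c^3-3*c)*A + (3*s-4*s^3)*B1
      = (4*c^2-1)^2/9 * (c^3*A + 3*c^2*s*B1 + 3*c*s^2*B2 + s^3*Bb)
        - 4*s^2/9*(2*c^2+1-2*r3*s*c) *
            ((c/2 - r3*s/2)^3*A + 3*(c/2 - r3*s/2)^2*(s/2 + r3*c/2)*B1
              + 3*(c/2 - r3*s/2)*(s/2 + r3*c/2)^2*B2 + (s/2 + r3*c/2)^3*Bb)
        + 4*s^2/9*(2*c^2+1+2*r3*s*c) *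
            ((-c/2 - r3*s/2)^3*A + 3*(-c/2 - r3*s/2)^2*(-s/2 + r3*c/2)*B1
              + 3*(-c/2 - r3*s/2)*(-s/2 + r3*c/2)^2*B2 + (-s/2 + r3*c/2)^3*Bb) := by
    linear_combination ((-3)*s*B1 + (1/9)*s^3*Bb + (1)*s^3*B1 + (3)*c*A + (1/3)*c*s^2*B2
        + (3)*c*s^2*A + (2)*c*s^4*B2 + (2)*c*s^4*A + (-8/3)*c^2*s*B1 + (-16/9)*c^2*s^3*Bb
        + (-8/9)*c^3*A + (-10/3)*c^3*s^2*B2 + (2)*c^3*s^2*A + (-16/3)*c^4*s*B1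
        + (-16/9)*c^5*A) * hcs'
      + ((1/3)*s^5*B1 + (-2/3)*c*s^4*B2 + (1/3)*c*s^4*A + (2/3)*c*s^6*B2 + (2/3)*c*s^6*A
        + (2/9)*c*s^6*r3^2*A + (1/3)*c^2*s^3*Bb + (-2/3)*c^2*s^3*B1 + (-2/3)*c^2*s^5*Bb
        + (-2/3)*c^2*s^5*r3^2*B1 + (1/3)*c^3*s^2*B2 + (-2/3)*c^3*s^4*B2 + (4/3)*c^3*s^4*A
        + (2/3)*c^3*s^4*r3^2*B2 + (-2)*c^4*s^3*B1 + (-2/9)*c^4*s^3*r3^2*Bb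
        + (2/3)*c^5*s^2*B2) * hr3
  set W1 := (4*c^2-1)^2/9 with hW1
  set W2 := 4*s^2/9*(2*c^2+1-2*r3*s*c) with hW2
  set W3 := 4*s^2/9*(2*c^2+1+2*r3*s*c) with hW3
  set F1 := c^3*A + 3*c^2*s*B1 + 3*c*s^2*B2 + s^3*Bb with hFF1
  set F2 := (c/2 - r3*s/2)^3*A + 3*(c/2 - r3*s/2)^2*(s/2 + r3*c/2)*B1
      + 3*(c/2 - r3*s/2)*(s/2 + r3*c/2)^2*B2 + (s/2 + r3*c/2)^3*Bb with hFF2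
  set F3 := (-c/2 - r3*s/2)^3*A + 3*(-c/2 - r3*s/2)^2*(-s/2 + r3*c/2)*B1
      + 3*(-c/2 - r3*s/2)*(-s/2 + r3*c/2)^2*B2 + (-s/2 + r3*c/2)^3*Bb with hFF3
  have key1 : r = (4*c^3-3*c)*A + (3*s-4*s^3)*B1 := by
    have h1 : Real.sin ψ ^2 + Real.cos ψ ^2 = 1 := Real.sin_sq_add_cos_sq ψ
    calc r = r * (Real.sin ψ^2 + Real.cos ψ^2) := by rw [h1, mul_one]
      _ = (Real.cos ψ)*(r*Real.cos ψ) + (Real.sin ψ)*(r*Real.sin ψ) := by ring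
      _ = (4*c^3-3*c)*A + (3*s-4*s^3)*B1 := by rw [hA, hB, hcos3, hsin3]
  have hrτ : r ≤ τ := by
    rw [key1, hid]
    have t1 : W1*F1 ≤ W1*τ := mul_le_mul_of_nonneg_left (abs_le.mp e1).2 hw1
    have t2 : W2*(-τ) ≤ W2*F2 := mul_le_mul_of_nonneg_left (abs_le.mp e2).1 hw2
    have t3 : W3*F3 ≤ W3*τ := mul_le_mul_of_nonneg_left (abs_le.mp e3).2 hw3
    have hsτ : W1*τ + W2*τ + W3*τ = τ := by linear_combination τ * hsum
    linarith [t1, t2, t3, hsτ]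
  calc A^2 + B1^2 = r^2 := hr2.symm
    _ ≤ τ^2 := pow_le_pow_left₀ hrpos.le hrτ 2


lemma mulVec_comb_apply (Γ : Matrix (Fin p) (Fin p) ℝ) (u v : Fin p → ℝ) (x y : ℝ) (j : Fin p) :
    Γ.mulVec (fun i => x * u i + y * v i) j = x * Γ.mulVec u j + y * Γ.mulVec v j := by
  simp only [Matrix.mulVec, dotProduct]
  rw [Finset.mul_sum, Finset.mul_sum, ← Finset.sum_add_distrib]
  exact Finset.sum_congr rfl fun k _ => by ring

lemma mulVec_smul_apply (Γ : Matrix (Fin p) (Fin p) ℝ) (u : Fin p → ℝ) (t : ℝ) (j : Fin p) :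
    Γ.mulVec (fun i => t * u i) j = t * Γ.mulVec u j := by
  simp only [Matrix.mulVec, dotProduct]
  rw [Finset.mul_sum]
  exact Finset.sum_congr rfl fun k _ => by ring

lemma euclNorm_smul (t : ℝ) (x : Fin p → ℝ) :
    euclNorm (fun i => t * x i) = |t| * euclNorm x := by
  simp only [euclNorm]
  rw [sum_sq_smul, Real.sqrt_mul (sq_nonneg t), Real.sqrt_sq_eq_abs]

lemma sum_sq_mulVec_comb (Γ : Matrix (Fin p) (Fin p) ℝ) (u v : Fin p → ℝ) (x y : ℝ) :
    ∑ j, (Γ.mulVec (fun i => x * u i + y * v i) j)^2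
      = x^2 * ∑ j, (Γ.mulVec u j)^2 + (2*x*y) * ∑ j, Γ.mulVec u j * Γ.mulVec v j
        + y^2 * ∑ j, (Γ.mulVec v j)^2 := by
  calc ∑ j, (Γ.mulVec (fun i => x * u i + y * v i) j)^2
      = ∑ j, (x * Γ.mulVec u j + y * Γ.mulVec v j)^2 :=
        Finset.sum_congr rfl fun j _ => by rw [mulVec_comb_apply]
    _ = _ := sum_sq_comb _ _ x y

lemma key_ortho (T : Fin p → Fin p → Fin p → ℝ)
    (hsym : ∀ i j k, T i j k = T j i k ∧ T i j k = T i k j)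
    (Γ : Matrix (Fin p) (Fin p) ℝ) (τ : ℝ) (hτ : 0 < τ)
    (hT' : ∀ w : Fin p → ℝ, |B3 T w w w| ≤ τ * euclNorm (Γ.mulVec w)^3)
    (a b : Fin p → ℝ)
    (na : ∑ i, (Γ.mulVec a i)^2 = 1) (nb : ∑ i, (Γ.mulVec b i)^2 = 1)
    (hab : ∑ i, Γ.mulVec a i * Γ.mulVec b i = 0) :
    (B3 T a a a)^2 + (B3 T a a b)^2 ≤ τ^2 := by
  apply trig_ineq τ (B3 T a a a) (B3 T a a b) (B3 T a b b) (B3 T b b b) hτ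
  intro x y hxy
  have h := hT' (fun i => x * a i + y * b i)
  rw [B3_expand T hsym a b x y] at h
  have hmv : euclNorm (Γ.mulVec (fun i => x * a i + y * b i)) = 1 := by
    apply euclNorm_eq_one
    rw [sum_sq_mulVec_comb, na, nb, hab]
    linear_combination hxy
  rw [hmv, one_pow, mul_one] at h
  exact h

lemma B3_degen (T : Fin p → Fin p → Fin p → ℝ)
    (hsym : ∀ i j k, T i j k = T j i k ∧ T i j k = T i k j)
    (Γ : Matrix (Fin p) (Fin p) ℝ) (τ : ℝ)
    (hT' : ∀ w : Fin p → ℝ, |B3 T w w w| ≤ τ * euclNorm (Γ.mulVec w)^3)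
    (z : Fin p → ℝ) (hz : Γ.mulVec z = 0) (x : Fin p → ℝ) :
    B3 T x x z = 0 ∧ B3 T x z z = 0 := by
  have hb : ∀ t : ℝ, |B3 T x x x + (3 * B3 T x x z)*t + (3 * B3 T x z z)*t^2
      + (B3 T z z z)*t^3| ≤ τ * euclNorm (Γ.mulVec x)^3 := by
    intro t
    have h := hT' (fun i => 1 * x i + t * z i)
    rw [B3_expand T hsym x z 1 t] at h
    have hmv : Γ.mulVec (fun i => 1 * x i + t * z i) = Γ.mulVec x := by
      funext j
      rw [mulVec_comb_apply, hz]
      simp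
    rw [hmv] at h
    have heq : B3 T x x x + (3 * B3 T x x z)*t + (3 * B3 T x z z)*t^2 + (B3 T z z z)*t^3
        = 1^3 * B3 T x x x + 3*1^2*t * B3 T x x z + 3*1*t^2 * B3 T x z z + t^3 * B3 T z z z := by
      ring
    rw [heq]
    exact h
  obtain ⟨h1, h2, _⟩ := cubic_bounded hb
  exact ⟨by linarith, by linarith⟩

set_option maxHeartbeats 1000000 in
lemma main_ineq (T : Fin p → Fin p → Fin p → ℝ)
    (hsym : ∀ i j k, T i j k = T j i k ∧ T i j k = T i k j)
    (Γ : Matrix (Fin p) (Fin p) ℝ) (τ : ℝ) (hτ : 0 < τ)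
    (hT' : ∀ w : Fin p → ℝ, |B3 T w w w| ≤ τ * euclNorm (Γ.mulVec w)^3)
    (u v : Fin p → ℝ) :
    B3 T v u u ≤ τ * euclNorm (Γ.mulVec u)^2 * euclNorm (Γ.mulVec v) := by
  by_cases hu : euclNorm (Γ.mulVec u) = 0
  · have hz : Γ.mulVec u = 0 := euclNorm_eq_zero hu
    have h := (B3_degen T hsym Γ τ hT' u hz v).2
    rw [h, hu]
    have : τ * (0:ℝ)^2 * euclNorm (Γ.mulVec v) = 0 := by ring
    rw [this]
  · have hαpos : 0 < euclNorm (Γ.mulVec u) := (euclNorm_nonneg _).lt_of_ne (Ne.symm hu)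
    set α := euclNorm (Γ.mulVec u) with hα
    set γ := euclNorm (Γ.mulVec v) with hγdef
    have hα2 : ∑ i, (Γ.mulVec u i)^2 = α^2 := (euclNorm_sq _).symm
    set q : ℝ := (∑ i, Γ.mulVec u i * Γ.mulVec v i) / α^2 with hq
    set w : Fin p → ℝ := fun i => 1 * v i + (-q) * u i with hw
    have hΓw : ∀ j, Γ.mulVec w j = Γ.mulVec v j - q * Γ.mulVec u j := by
      intro j
      rw [hw, mulVec_comb_apply]
      ring
    have husq : ∑ i, Γ.mulVec u i * Γ.mulVec u i = α^2 := by
      rw [← hα2]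
      exact Finset.sum_congr rfl fun i _ => by ring
    have hβw : ∑ i, Γ.mulVec u i * Γ.mulVec w i = 0 := by
      have hterm : ∀ i, Γ.mulVec u i * Γ.mulVec w i
          = Γ.mulVec u i * Γ.mulVec v i - q * (Γ.mulVec u i * Γ.mulVec u i) := by
        intro i; rw [hΓw]; ring
      rw [Finset.sum_congr rfl (fun i _ => hterm i), Finset.sum_sub_distrib, ← Finset.mul_sum,
        husq, hq]
      field_simp
      ring
    set δ := euclNorm (Γ.mulVec w) with hδdef
    have hδ2 : ∑ i, (Γ.mulVec w i)^2 = δ^2 := (euclNorm_sq _).symm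
    have hγ2 : γ^2 = δ^2 + q^2 * α^2 := by
      have hvj : ∀ j, Γ.mulVec v j = 1 * Γ.mulVec w j + q * Γ.mulVec u j := by
        intro j; rw [hΓw]; ring
      have h1 : γ^2 = ∑ j, (1 * Γ.mulVec w j + q * Γ.mulVec u j)^2 := by
        rw [hγdef, euclNorm_sq]
        exact Finset.sum_congr rfl fun j _ => by rw [hvj]
      have hwu : ∑ i, Γ.mulVec w i * Γ.mulVec u i = 0 := by
        rw [← hβw]
        exact Finset.sum_congr rfl fun i _ => by ring
      rw [h1, sum_sq_comb, hδ2, hα2, hwu]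
      ring
    have hveq : v = fun i => 1 * w i + q * u i := by
      funext i
      simp only [hw]
      ring
    have hsplit : B3 T v u u = 1 * B3 T w u u + q * B3 T u u u := by
      calc B3 T v u u = B3 T (fun i => 1 * w i + q * u i) u u := by rw [← hveq]
        _ = 1 * B3 T w u u + q * B3 T u u u := B3_comb1 T w u u u 1 q
    by_cases hδ0 : δ = 0
    · have hzw : Γ.mulVec w = 0 := euclNorm_eq_zero hδ0
      have hB3w : B3 T w u u = 0 := by
        have h := (B3_degen T hsym Γ τ hT' w hzw u).1
        rw [B3_swap12 T hsym w u u, B3_swap23 T hsym u w u]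
        exact h
      have hTu := hT' u
      have hγq : γ = |q| * α := by
        rw [hδ0] at hγ2
        have h2 : (0:ℝ) ≤ γ := euclNorm_nonneg _
        have h3 : (0:ℝ) ≤ |q| * α := mul_nonneg (abs_nonneg _) hαpos.le
        have h1 : γ^2 = (|q| * α)^2 := by
          rw [hγ2, mul_pow, sq_abs]
          ring
        rw [← Real.sqrt_sq h2, h1, Real.sqrt_sq h3]
      rw [hsplit, hB3w]
      calc 1 * 0 + q * B3 T u u u = q * B3 T u u u := by ring
        _ ≤ |q * B3 T u u u| := le_abs_self _
        _ = |q| * |B3 T u u u| := abs_mul _ _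
        _ ≤ |q| * (τ * α^3) := mul_le_mul_of_nonneg_left hTu (abs_nonneg q)
        _ = τ * α^2 * (|q| * α) := by ring
        _ = τ * α^2 * γ := by rw [hγq]
    · have hδpos : 0 < δ := (euclNorm_nonneg _).lt_of_ne (Ne.symm hδ0)
      set af : Fin p → ℝ := fun i => α⁻¹ * u i with haf
      set bf : Fin p → ℝ := fun i => δ⁻¹ * w i with hbf
      have hΓaf : ∀ j, Γ.mulVec af j = α⁻¹ * Γ.mulVec u j := by
        intro j; rw [haf, mulVec_smul_apply]
      have hΓbf : ∀ j, Γ.mulVec bf j = δ⁻¹ * Γ.mulVec w j := by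
        intro j; rw [hbf, mulVec_smul_apply]
      have na : ∑ i, (Γ.mulVec af i)^2 = 1 := by
        calc ∑ i, (Γ.mulVec af i)^2 = ∑ i, (α⁻¹ * Γ.mulVec u i)^2 :=
              Finset.sum_congr rfl fun i _ => by rw [hΓaf]
          _ = (α⁻¹)^2 * ∑ i, (Γ.mulVec u i)^2 := sum_sq_smul _ _
          _ = 1 := by rw [hα2]; field_simp
      have nb : ∑ i, (Γ.mulVec bf i)^2 = 1 := by
        calc ∑ i, (Γ.mulVec bf i)^2 = ∑ i, (δ⁻¹ * Γ.mulVec w i)^2 :=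
              Finset.sum_congr rfl fun i _ => by rw [hΓbf]
          _ = (δ⁻¹)^2 * ∑ i, (Γ.mulVec w i)^2 := sum_sq_smul _ _
          _ = 1 := by rw [hδ2]; field_simp
      have hab : ∑ i, Γ.mulVec af i * Γ.mulVec bf i = 0 := by
        calc ∑ i, Γ.mulVec af i * Γ.mulVec bf i
            = ∑ i, (α⁻¹ * Γ.mulVec u i) * (δ⁻¹ * Γ.mulVec w i) :=
              Finset.sum_congr rfl fun i _ => by rw [hΓaf, hΓbf]
          _ = α⁻¹ * δ⁻¹ * ∑ i, Γ.mulVec u i * Γ.mulVec w i := sum_mul_smul _ _ _ _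
          _ = 0 := by rw [hβw]; ring
      have hkey := key_ortho T hsym Γ τ hτ hT' af bf na nb hab
      have huaf : u = fun i => α * af i := by
        funext i
        simp only [haf]
        field_simp
      have hwbf : w = fun i => δ * bf i := by
        funext i
        simp only [hbf]
        field_simp
      have hTu3 : B3 T u u u = α^3 * B3 T af af af := by
        calc B3 T u u u
            = B3 T (fun i => α * af i) (fun i => α * af i) (fun i => α * af i) := by rw [← huaf]
          _ = α*α*α * B3 T af af af := B3_smul3 T af af af α α α
          _ = α^3 * B3 T af af af := by ring
      have hBw : B3 T w u u = δ * α^2 * B3 T af af bf := by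
        calc B3 T w u u
            = B3 T (fun i => δ * bf i) (fun i => α * af i) (fun i => α * af i) := by
              rw [← huaf, ← hwbf]
          _ = δ*α*α * B3 T bf af af := B3_smul3 T bf af af δ α α
          _ = δ * α^2 * B3 T af af bf := by
              rw [B3_swap12 T hsym bf af af, B3_swap23 T hsym af bf af]
              ring
      rw [hsplit, hBw, hTu3]
      set A := B3 T af af af with hA
      set B1 := B3 T af af bf with hB1
      have hγτ : (0:ℝ) ≤ γ * τ := mul_nonneg (euclNorm_nonneg _) hτ.le
      clear_value α γ q w δ af bf A B1
      have hCS : (δ*B1 + q*α*A)^2 ≤ (δ^2 + q^2*α^2) * (A^2 + B1^2) := by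
        nlinarith [sq_nonneg (δ*A - q*α*B1)]
      have hnn : (0:ℝ) ≤ δ^2 + q^2*α^2 := by positivity
      have hchain : (δ*B1 + q*α*A)^2 ≤ γ^2 * τ^2 := by
        have h1 := mul_le_mul_of_nonneg_left hkey hnn
        have h2 : (δ^2 + q^2*α^2) * τ^2 = γ^2 * τ^2 := by
          linear_combination τ^2 * hγ2.symm
        linarith [hCS, h1, h2.symm.le, h2.le]
      have hfin : δ*B1 + q*α*A ≤ γ*τ := by
        nlinarith [hchain, hγτ]
      have hmul := mul_le_mul_of_nonneg_left hfin (sq_nonneg α)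
      linarith [hmul]

end TGNB

open TGNB in
/-- If the symmetric 3-tensor `T` satisfies condition (Γ), then the
gradient `∇T(u)`, with `i`-th entry `3 ∑_{j,k} T_{i,j,k} u_j u_k`, satisfies
`‖∇T(u)‖ ≤ 3τ ‖Γu‖² ‖Γ‖` for every `u`. -/
theorem tensor_gradient_norm_bound
    (p : ℕ) (T : Fin p → Fin p → Fin p → ℝ)
    (hsym : ∀ i j k, T i j k = T j i k ∧ T i j k = T i k j)
    (Γ : Matrix (Fin p) (Fin p) ℝ) (hΓ : Γ.IsSymm) (τ : ℝ) (hτ : 0 < τ)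
    (hT : ∀ u : Fin p → ℝ,
      |∑ i, ∑ j, ∑ k, T i j k * u i * u j * u k| ≤ τ * euclNorm (Γ.mulVec u) ^ 3) :
    ∀ u : Fin p → ℝ,
      euclNorm (fun i => 3 * ∑ j, ∑ k, T i j k * u j * u k)
        ≤ 3 * τ * euclNorm (Γ.mulVec u) ^ 2 * specNorm Γ := by
  intro u
  have hT' : ∀ w : Fin p → ℝ, |B3 T w w w| ≤ τ * euclNorm (Γ.mulVec w) ^ 3 := hT
  set D : Fin p → ℝ := fun i => ∑ j, ∑ k, T i j k * u j * u k with hD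
  have hgoal : (fun i => 3 * ∑ j, ∑ k, T i j k * u j * u k) = fun i => 3 * D i := by
    funext i
    simp only [hD]
  rw [hgoal, euclNorm_smul, show |(3:ℝ)| = 3 from by norm_num]
  have hBD : B3 T D u u = ∑ i, D i ^ 2 := by
    calc B3 T D u u = ∑ i, D i * ∑ j, ∑ k, T i j k * u j * u k := by
          refine Finset.sum_congr rfl fun i _ => ?_
          rw [Finset.mul_sum]
          refine Finset.sum_congr rfl fun j _ => ?_
          rw [Finset.mul_sum]
          exact Finset.sum_congr rfl fun k _ => by ring
      _ = ∑ i, D i ^ 2 := by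
          refine Finset.sum_congr rfl fun i _ => ?_
          rw [show (∑ j, ∑ k, T i j k * u j * u k) = D i from by simp only [hD]]
          ring
  have hM := main_ineq T hsym Γ τ hτ hT' u D
  have hspec := euclNorm_mulVec_le Γ D
  have hDsq : euclNorm D ^ 2 ≤ τ * euclNorm (Γ.mulVec u)^2 * (specNorm Γ * euclNorm D) := by
    have hnn : (0:ℝ) ≤ τ * euclNorm (Γ.mulVec u)^2 := by positivity
    calc euclNorm D ^ 2 = ∑ i, D i ^ 2 := euclNorm_sq D
      _ = B3 T D u u := hBD.symm
      _ ≤ τ * euclNorm (Γ.mulVec u)^2 * euclNorm (Γ.mulVec D) := hM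
      _ ≤ τ * euclNorm (Γ.mulVec u)^2 * (specNorm Γ * euclNorm D) :=
          mul_le_mul_of_nonneg_left hspec hnn
  have hspecnn : (0:ℝ) ≤ specNorm Γ := norm_nonneg _
  by_cases hD0 : euclNorm D = 0
  · rw [hD0, mul_zero]
    exact mul_nonneg (mul_nonneg (by positivity) (sq_nonneg _)) hspecnn
  · have hDpos : 0 < euclNorm D := (euclNorm_nonneg _).lt_of_ne (Ne.symm hD0)
    nlinarith [hDsq, hDpos]
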